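/- For complex numbers y, ȳ, w, w̄, set e_1 = w + w̄ and e_2 = y·w̄ + ȳ·w + w·w̄. Then for every positive integer n: sum_{k=0}^{n-1} binom(n,k) (y^k w^{n-k} + ȳ^k w̄^{n-k}) = sum over tuples (n_1,n_2,n_3,n_4) of nonnegative integers with n_1+n_2+n_3+2n_4 = n and n_3+n_4 ≥ 1, of (-1)^{n_4} · n · [prod_{k=1}^{n_3+n_4-1} (n_1+k)(n_2+k)] / (n_3! n_4! (n_3+n_4-1)!) · y^{n_1} ȳ^{n_2} e_1^{n_3} e_2^{n_4}. -/

import Mathlib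

open Finset

abbrev Q4 := ℕ × ℕ × ℕ × ℕ
def wt (q : Q4) : ℕ := q.1 + q.2.1 + q.2.2.1 + 2 * q.2.2.2
def p1 (a t : ℕ) : ℕ := ∏ k ∈ Finset.Icc 1 t, (a + k)
lemma p1_succ (a t : ℕ) : p1 a (t+1) = p1 a t * (a + t + 1) := by
  rw [p1, p1, Finset.prod_Icc_succ_top (by omega)]; ring_nf
lemma p1_succ_left (a t : ℕ) : p1 a (t+1) = (a+1) * p1 (a+1) t := by
  induction t with
  | zero => simp [p1]
  | succ t ih => rw [p1_succ, ih, p1_succ]; ring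
noncomputable def cx (q : Q4) : ℂ :=
  if 1 ≤ q.2.2.1 + q.2.2.2 then
    (-1) ^ q.2.2.2 * (wt q : ℂ) *
      ((p1 q.1 (q.2.2.1 + q.2.2.2 - 1) * p1 q.2.1 (q.2.2.1 + q.2.2.2 - 1) : ℕ) : ℂ) /
      ((q.2.2.1.factorial * q.2.2.2.factorial * (q.2.2.1 + q.2.2.2 - 1).factorial : ℕ) : ℂ)
  else if q.1 = 0 ∨ q.2.1 = 0 then 1 else 0
lemma cx_pos (n1 n2 n3 n4 : ℕ) (h : 1 ≤ n3 + n4) :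
    cx (n1, n2, n3, n4) =
      (-1) ^ n4 * ((n1 + n2 + n3 + 2*n4 : ℕ) : ℂ) *
        ((p1 n1 (n3 + n4 - 1) * p1 n2 (n3 + n4 - 1) : ℕ) : ℂ) /
        ((n3.factorial * n4.factorial * (n3 + n4 - 1).factorial : ℕ) : ℂ) := by
  simp only [cx, wt, if_pos h]
lemma cx_zero (n1 n2 : ℕ) :
    cx (n1, n2, 0, 0) = if n1 = 0 ∨ n2 = 0 then 1 else 0 := by simp [cx]
lemma cx_e1 (n1 n2 : ℕ) : cx (n1, n2, 1, 0) = ((n1 + n2 + 1 : ℕ) : ℂ) := by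
  rw [cx_pos _ _ _ _ (by omega)]; simp [p1, Nat.factorial]
lemma cx_e2 (n1 n2 : ℕ) : cx (n1, n2, 0, 1) = -((n1 + n2 + 2 : ℕ) : ℂ) := by
  rw [cx_pos _ _ _ _ (by omega)]; simp [p1, Nat.factorial]

section terms
variable (n1 n2 n3 n4 j : ℕ)
lemma cx_main (hm : n3 + n4 = j + 2) :
    cx (n1, n2, n3, n4)
      = (-1)^n4 * ((n1:ℂ)+n2+n3+2*n4) * (((n1:ℂ)+j+1) * (p1 n1 j : ℕ)) *
          (((n2:ℂ)+j+1) * (p1 n2 j : ℕ)) /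
        ((n3.factorial * n4.factorial * (j+1).factorial : ℕ) : ℂ) := by
  rw [cx_pos _ _ _ _ (by omega)]
  have h1 : n3 + n4 - 1 = j + 1 := by omega
  rw [h1, p1_succ, p1_succ]; push_cast; ring
lemma t1_eq (hm : n3 + n4 = j + 2) :
    (if 1 ≤ n1 then cx (n1-1, n2, n3, n4) else 0)
      = (-1)^n4 * ((n1:ℂ)+n2+n3+2*n4-1) * ((n1:ℂ) * (p1 n1 j : ℕ)) *
          (((n2:ℂ)+j+1) * (p1 n2 j : ℕ)) /
        ((n3.factorial * n4.factorial * (j+1).factorial : ℕ) : ℂ) := by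
  rcases n1 with _ | a
  · norm_num
  · rw [if_pos (by omega), cx_pos _ _ _ _ (by omega)]
    have h1 : n3 + n4 - 1 = j + 1 := by omega
    rw [Nat.add_sub_cancel, h1, p1_succ_left, p1_succ]
    push_cast; ring
lemma t2_eq (hm : n3 + n4 = j + 2) :
    (if 1 ≤ n2 then cx (n1, n2-1, n3, n4) else 0)
      = (-1)^n4 * ((n1:ℂ)+n2+n3+2*n4-1) * (((n1:ℂ)+j+1) * (p1 n1 j : ℕ)) *
          ((n2:ℂ) * (p1 n2 j : ℕ)) /
        ((n3.factorial * n4.factorial * (j+1).factorial : ℕ) : ℂ) := by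
  rcases n2 with _ | a
  · norm_num
  · rw [if_pos (by omega), cx_pos _ _ _ _ (by omega)]
    have h1 : n3 + n4 - 1 = j + 1 := by omega
    rw [Nat.add_sub_cancel, h1, p1_succ, p1_succ_left]
    push_cast; ring
lemma t12_eq (hm : n3 + n4 = j + 2) :
    (if 1 ≤ n1 ∧ 1 ≤ n2 then cx (n1-1, n2-1, n3, n4) else 0)
      = (-1)^n4 * ((n1:ℂ)+n2+n3+2*n4-2) * ((n1:ℂ) * (p1 n1 j : ℕ)) *
          ((n2:ℂ) * (p1 n2 j : ℕ)) /
        ((n3.factorial * n4.factorial * (j+1).factorial : ℕ) : ℂ) := by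
  rcases n1 with _ | a
  · norm_num
  rcases n2 with _ | b
  · norm_num
  rw [if_pos (by omega), cx_pos _ _ _ _ (by omega)]
  have h1 : n3 + n4 - 1 = j + 1 := by omega
  rw [Nat.add_sub_cancel, Nat.add_sub_cancel, h1, p1_succ_left, p1_succ_left]
  push_cast; ring
lemma t3_eq (hm : n3 + n4 = j + 2) :
    (if 1 ≤ n3 then cx (n1, n2, n3-1, n4) else 0)
      = (-1)^n4 * ((n1:ℂ)+n2+n3+2*n4-1) * (n3:ℂ) * ((j:ℂ)+1) *
          ((p1 n1 j * p1 n2 j : ℕ) : ℂ) /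
        ((n3.factorial * n4.factorial * (j+1).factorial : ℕ) : ℂ) := by
  rcases n3 with _ | c
  · norm_num
  · rw [if_pos (by omega), cx_pos _ _ _ _ (by omega)]
    have h1 : c + n4 - 1 = j := by omega
    rw [Nat.add_sub_cancel, h1]
    rw [div_eq_div_iff (Nat.cast_ne_zero.2 (by positivity)) (Nat.cast_ne_zero.2 (by positivity))]
    simp only [Nat.factorial_succ]
    push_cast; ring
lemma t4_eq (hm : n3 + n4 = j + 2) :
    (if 1 ≤ n4 then cx (n1, n2, n3, n4-1) else 0)
      = -((-1)^n4) * ((n1:ℂ)+n2+n3+2*n4-2) * (n4:ℂ) * ((j:ℂ)+1) *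
          ((p1 n1 j * p1 n2 j : ℕ) : ℂ) /
        ((n3.factorial * n4.factorial * (j+1).factorial : ℕ) : ℂ) := by
  rcases n4 with _ | d
  · norm_num
  · rw [if_pos (by omega), cx_pos _ _ _ _ (by omega)]
    have h1 : n3 + d - 1 = j := by omega
    rw [Nat.add_sub_cancel, h1]
    rw [div_eq_div_iff (Nat.cast_ne_zero.2 (by positivity)) (Nat.cast_ne_zero.2 (by positivity))]
    simp only [Nat.factorial_succ]
    push_cast; ring
end terms

set_option maxHeartbeats 1000000 in
lemma cx_rec (n1 n2 n3 n4 : ℕ) (hN : 3 ≤ n1 + n2 + n3 + 2*n4) :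
    cx (n1, n2, n3, n4) =
      (if 1 ≤ n1 then cx (n1-1, n2, n3, n4) else 0)
      + (if 1 ≤ n2 then cx (n1, n2-1, n3, n4) else 0)
      + (if 1 ≤ n3 then cx (n1, n2, n3-1, n4) else 0)
      - (if 1 ≤ n1 ∧ 1 ≤ n2 then cx (n1-1, n2-1, n3, n4) else 0)
      - (if 1 ≤ n4 then cx (n1, n2, n3, n4-1) else 0) := by
  rcases le_or_gt 2 (n3 + n4) with hm2 | hm2
  · -- m ≥ 2
    obtain ⟨j, hm⟩ : ∃ j, n3 + n4 = j + 2 := ⟨n3 + n4 - 2, by omega⟩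
    rw [cx_main n1 n2 n3 n4 j hm, t1_eq n1 n2 n3 n4 j hm, t2_eq n1 n2 n3 n4 j hm,
      t3_eq n1 n2 n3 n4 j hm, t12_eq n1 n2 n3 n4 j hm, t4_eq n1 n2 n3 n4 j hm,
      ← add_div, ← add_div, div_sub_div_same, div_sub_div_same]
    congr 1
    have hc : (n3 : ℂ) = (j : ℂ) + 2 - (n4 : ℂ) := by
      have := congrArg (Nat.cast : ℕ → ℂ) hm
      push_cast at this
      linear_combination this
    push_cast
    rw [hc]
    ring
  · rcases (by omega : (n3 = 0 ∧ n4 = 0) ∨ (n3 = 1 ∧ n4 = 0) ∨ (n3 = 0 ∧ n4 = 1)) with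
      ⟨h3, h4⟩ | ⟨h3, h4⟩ | ⟨h3, h4⟩ <;> subst h3 <;> subst h4 <;>
    rcases n1 with _ | a <;> rcases n2 with _ | b <;>
      simp only [Nat.sub_self, Nat.add_sub_cancel, cx_e1, cx_e2, cx_zero] <;>
      split_ifs <;> (first | (exfalso; omega) | (push_cast; ring1) | (norm_num; done) | (simp_all; done))

def dom (n : ℕ) : Finset Q4 :=
  (Finset.range (n+1) ×ˢ Finset.range (n+1) ×ˢ Finset.range (n+1) ×ˢ Finset.range (n+1)).filter
    (fun q => wt q = n)

lemma shift_eval (a b c d n : ℕ) (h : a + b + c + 2*d ≤ n) (g : Q4 → ℂ) :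
    ∑ q ∈ dom n, (if a ≤ q.1 ∧ b ≤ q.2.1 ∧ c ≤ q.2.2.1 ∧ d ≤ q.2.2.2 then g q else 0)
      = ∑ q ∈ dom (n - (a+b+c+2*d)), g (q.1 + a, q.2.1 + b, q.2.2.1 + c, q.2.2.2 + d) := by
  rw [← Finset.sum_filter]
  apply Finset.sum_nbij' (i := fun q => (q.1 - a, q.2.1 - b, q.2.2.1 - c, q.2.2.2 - d))
    (j := fun q => (q.1 + a, q.2.1 + b, q.2.2.1 + c, q.2.2.2 + d))
  · intro q hq
    simp only [dom, Finset.mem_filter, Finset.mem_product, Finset.mem_range] at hq ⊢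
    simp only [wt] at hq ⊢
    omega
  · intro q hq
    simp only [dom, Finset.mem_filter, Finset.mem_product, Finset.mem_range] at hq ⊢
    simp only [wt] at hq ⊢
    omega
  · intro q hq
    obtain ⟨q1, q2, q3, q4⟩ := q
    simp only [dom, mem_filter, mem_product, mem_range, wt] at hq
    simp only [Prod.mk.injEq]
    omega
  · intro q hq
    obtain ⟨q1, q2, q3, q4⟩ := q
    simp only [dom, mem_filter, mem_product, mem_range, wt] at hq
    simp only [Prod.mk.injEq]
    omega
  · intro q hq
    obtain ⟨q1, q2, q3, q4⟩ := q
    simp only [dom, mem_filter, mem_product, mem_range, wt] at hq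
    congr 1
    simp only [Prod.mk.injEq]
    omega

noncomputable section
variable (y yb w wb : ℂ)

def Mo (q : Q4) : ℂ :=
  y ^ q.1 * yb ^ q.2.1 * (w + wb) ^ q.2.2.1 * (y*wb + yb*w + w*wb) ^ q.2.2.2

def S0 (n : ℕ) : ℂ := ∑ q ∈ dom n, cx q * Mo y yb w wb q

lemma S0_rec (n : ℕ) (hn : 3 ≤ n) :
    S0 y yb w wb n =
      (y + yb + (w + wb)) * S0 y yb w wb (n-1)
      - (y*yb + (y*wb + yb*w + w*wb)) * S0 y yb w wb (n-2) := by
  have hsplit : S0 y yb w wb n =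
      (∑ q ∈ dom n, (if 1 ≤ q.1 ∧ 0 ≤ q.2.1 ∧ 0 ≤ q.2.2.1 ∧ 0 ≤ q.2.2.2 then
          cx (q.1-1, q.2.1, q.2.2.1, q.2.2.2) * Mo y yb w wb q else 0))
      + (∑ q ∈ dom n, (if 0 ≤ q.1 ∧ 1 ≤ q.2.1 ∧ 0 ≤ q.2.2.1 ∧ 0 ≤ q.2.2.2 then
          cx (q.1, q.2.1-1, q.2.2.1, q.2.2.2) * Mo y yb w wb q else 0))
      + (∑ q ∈ dom n, (if 0 ≤ q.1 ∧ 0 ≤ q.2.1 ∧ 1 ≤ q.2.2.1 ∧ 0 ≤ q.2.2.2 then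
          cx (q.1, q.2.1, q.2.2.1-1, q.2.2.2) * Mo y yb w wb q else 0))
      - (∑ q ∈ dom n, (if 1 ≤ q.1 ∧ 1 ≤ q.2.1 ∧ 0 ≤ q.2.2.1 ∧ 0 ≤ q.2.2.2 then
          cx (q.1-1, q.2.1-1, q.2.2.1, q.2.2.2) * Mo y yb w wb q else 0))
      - (∑ q ∈ dom n, (if 0 ≤ q.1 ∧ 0 ≤ q.2.1 ∧ 0 ≤ q.2.2.1 ∧ 1 ≤ q.2.2.2 then
          cx (q.1, q.2.1, q.2.2.1, q.2.2.2-1) * Mo y yb w wb q else 0)) := by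
    rw [S0, ← Finset.sum_add_distrib, ← Finset.sum_add_distrib, ← Finset.sum_sub_distrib,
      ← Finset.sum_sub_distrib]
    apply Finset.sum_congr rfl
    intro q hq
    have hwt : wt q = n := by
      simp only [dom, mem_filter] at hq
      exact hq.2
    have h3 : 3 ≤ q.1 + q.2.1 + q.2.2.1 + 2 * q.2.2.2 := by
      simp only [wt] at hwt
      omega
    have hrec := cx_rec q.1 q.2.1 q.2.2.1 q.2.2.2 h3
    have heta : cx q = cx (q.1, q.2.1, q.2.2.1, q.2.2.2) := rfl
    rw [heta, hrec]
    simp only [Nat.zero_le, true_and, and_true, add_mul, sub_mul, ite_mul, zero_mul]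
  rw [hsplit,
    shift_eval 1 0 0 0 n (by omega), shift_eval 0 1 0 0 n (by omega),
    shift_eval 0 0 1 0 n (by omega), shift_eval 1 1 0 0 n (by omega),
    shift_eval 0 0 0 1 n (by omega)]
  have e1 : (∑ q ∈ dom (n - (1+0+0+2*0)),
      cx ((q.1+1) - 1, q.2.1 + 0, q.2.2.1 + 0, q.2.2.2 + 0) *
        Mo y yb w wb (q.1 + 1, q.2.1 + 0, q.2.2.1 + 0, q.2.2.2 + 0))
      = y * S0 y yb w wb (n-1) := by
    rw [S0, Finset.mul_sum]
    apply Finset.sum_congr (by norm_num) ?_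
    intro q hq
    simp only [Mo, Nat.add_sub_cancel, Nat.add_zero]
    ring
  have e2 : (∑ q ∈ dom (n - (0+1+0+2*0)),
      cx (q.1 + 0, (q.2.1+1) - 1, q.2.2.1 + 0, q.2.2.2 + 0) *
        Mo y yb w wb (q.1 + 0, q.2.1 + 1, q.2.2.1 + 0, q.2.2.2 + 0))
      = yb * S0 y yb w wb (n-1) := by
    rw [S0, Finset.mul_sum]
    apply Finset.sum_congr (by norm_num) ?_
    intro q hq
    simp only [Mo, Nat.add_sub_cancel, Nat.add_zero]
    ring
  have e3 : (∑ q ∈ dom (n - (0+0+1+2*0)),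
      cx (q.1 + 0, q.2.1 + 0, (q.2.2.1+1) - 1, q.2.2.2 + 0) *
        Mo y yb w wb (q.1 + 0, q.2.1 + 0, q.2.2.1 + 1, q.2.2.2 + 0))
      = (w + wb) * S0 y yb w wb (n-1) := by
    rw [S0, Finset.mul_sum]
    apply Finset.sum_congr (by norm_num) ?_
    intro q hq
    simp only [Mo, Nat.add_sub_cancel, Nat.add_zero]
    ring
  have e12 : (∑ q ∈ dom (n - (1+1+0+2*0)),
      cx ((q.1+1) - 1, (q.2.1+1) - 1, q.2.2.1 + 0, q.2.2.2 + 0) *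
        Mo y yb w wb (q.1 + 1, q.2.1 + 1, q.2.2.1 + 0, q.2.2.2 + 0))
      = (y * yb) * S0 y yb w wb (n-2) := by
    rw [S0, Finset.mul_sum]
    apply Finset.sum_congr (by norm_num) ?_
    intro q hq
    simp only [Mo, Nat.add_sub_cancel, Nat.add_zero]
    ring
  have e4 : (∑ q ∈ dom (n - (0+0+0+2*1)),
      cx (q.1 + 0, q.2.1 + 0, q.2.2.1 + 0, (q.2.2.2+1) - 1) *
        Mo y yb w wb (q.1 + 0, q.2.1 + 0, q.2.2.1 + 0, q.2.2.2 + 1))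
      = (y*wb + yb*w + w*wb) * S0 y yb w wb (n-2) := by
    rw [S0, Finset.mul_sum]
    apply Finset.sum_congr (by norm_num) ?_
    intro q hq
    simp only [Mo, Nat.add_sub_cancel, Nat.add_zero]
    ring
  rw [e1, e2, e3, e12, e4]
  ring
end

noncomputable section
variable (y yb w wb : ℂ)
lemma cx_0020 : cx (0, 0, 2, 0) = 1 := by
  rw [cx_pos _ _ _ _ (by omega)]
  norm_num [p1, Nat.factorial]

lemma S0_one : S0 y yb w wb 1 = (y + w) + (yb + wb) := by
  rw [S0, show dom 1 = {(1,0,0,0),(0,1,0,0),(0,0,1,0)} from by decide]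
  rw [Finset.sum_insert (by decide), Finset.sum_insert (by decide), Finset.sum_singleton]
  rw [show ((1,0,0,0) : Q4) = (1,0,0,0) from rfl]
  rw [cx_zero, cx_zero, cx_e1]
  norm_num [Mo]
  ring

lemma S0_two : S0 y yb w wb 2 = (y + w)^2 + (yb + wb)^2 := by
  rw [S0, show dom 2 = {(2,0,0,0),(1,1,0,0),(1,0,1,0),(0,2,0,0),(0,1,1,0),(0,0,2,0),(0,0,0,1)}
    from by decide]
  rw [Finset.sum_insert (by decide), Finset.sum_insert (by decide), Finset.sum_insert (by decide),
    Finset.sum_insert (by decide), Finset.sum_insert (by decide), Finset.sum_insert (by decide),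
    Finset.sum_singleton]
  rw [cx_zero, cx_zero, cx_e1, cx_zero, cx_e1, cx_0020, cx_e2]
  norm_num [Mo]
  ring

lemma S0_closed (n : ℕ) (hn : 1 ≤ n) : S0 y yb w wb n = (y + w)^n + (yb + wb)^n := by
  induction n using Nat.strong_induction_on with
  | _ n ih =>
    match n, hn with
    | 1, _ => rw [S0_one y yb w wb]; ring
    | 2, _ => exact S0_two y yb w wb

    | (k+3), _ =>
      rw [S0_rec y yb w wb (k+3) (by omega)]
      have h1 := ih (k+2) (by omega) (by omega)
      have h2 := ih (k+1) (by omega) (by omega)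
      rw [show k+3-1 = k+2 from rfl, show k+3-2 = k+1 from rfl, h1, h2]
      ring
end

noncomputable section
variable (y yb w wb : ℂ)
-- the m = 0 tail
lemma tail_eval (n : ℕ) (hn : 1 ≤ n) :
    ∑ q ∈ (dom n).filter (fun q => ¬ 1 ≤ q.2.2.1 + q.2.2.2), cx q * Mo y yb w wb q
      = y^n + yb^n := by
  have step1 : ∀ q ∈ (dom n).filter (fun q => ¬ 1 ≤ q.2.2.1 + q.2.2.2),
      cx q * Mo y yb w wb q
        = if q.1 = 0 ∨ q.2.1 = 0 then Mo y yb w wb q else 0 := by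
    rintro ⟨a, b, c, d⟩ hq
    simp only [mem_filter] at hq
    obtain ⟨-, hm⟩ := hq
    have hc : c = 0 := by omega
    have hd : d = 0 := by omega
    subst hc; subst hd
    rw [cx_zero]
    simp only [ite_mul, one_mul, zero_mul]
  rw [Finset.sum_congr rfl step1, ← Finset.sum_filter]
  have hset : ((dom n).filter (fun q => ¬ 1 ≤ q.2.2.1 + q.2.2.2)).filter
      (fun q => q.1 = 0 ∨ q.2.1 = 0) = {((n:ℕ),0,0,0), ((0:ℕ),n,0,0)} := by
    ext ⟨a, b, c, d⟩
    simp only [dom, Finset.mem_filter, Finset.mem_product, Finset.mem_range, mem_insert, mem_singleton,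
      Prod.mk.injEq]
    simp only [wt]
    omega
  rw [hset, Finset.sum_pair (by simp; omega)]
  simp [Mo]

end

/- Lemma B.1 of the paper. For complex `y, ȳ, w, w̄` with `e₁ = w + w̄`,
`e₂ = y w̄ + ȳ w + w w̄`, and every `n ≥ 1`:
`∑_{k=0}^{n-1} C(n,k) (y^k w^{n-k} + ȳ^k w̄^{n-k})
  = ∑_{(n₁,n₂,n₃,n₄) : n₁+n₂+n₃+2n₄ = n, n₃+n₄ ≥ 1}
      (-1)^{n₄} n (∏_{k=1}^{n₃+n₄-1} (n₁+k)(n₂+k)) / (n₃! n₄! (n₃+n₄-1)!)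
      · y^{n₁} ȳ^{n₂} e₁^{n₃} e₂^{n₄}`. -/
theorem tuple_decomposition (n : ℕ) (hn : 1 ≤ n) (y yb w wb : ℂ) :
    ∑ k ∈ Finset.range n, (n.choose k : ℂ) *
        (y ^ k * w ^ (n - k) + yb ^ k * wb ^ (n - k)) =
      ∑ q ∈ (Finset.range (n + 1) ×ˢ Finset.range (n + 1) ×ˢ
            Finset.range (n + 1) ×ˢ Finset.range (n + 1)).filter
          (fun q => q.1 + q.2.1 + q.2.2.1 + 2 * q.2.2.2 = n ∧
            1 ≤ q.2.2.1 + q.2.2.2),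
        (-1 : ℂ) ^ q.2.2.2 * (n : ℂ) *
          (∏ k ∈ Finset.Icc 1 (q.2.2.1 + q.2.2.2 - 1),
            (((q.1 + k : ℕ) : ℂ) * ((q.2.1 + k : ℕ) : ℂ))) /
          ((q.2.2.1.factorial : ℂ) * (q.2.2.2.factorial : ℂ) *
            ((q.2.2.1 + q.2.2.2 - 1).factorial : ℂ)) *
          (y ^ q.1 * yb ^ q.2.1 * (w + wb) ^ q.2.2.1 *
            (y * wb + yb * w + w * wb) ^ q.2.2.2) := by
  -- RHS = filtered sum of cx * Mo
  have hRHS : (∑ q ∈ (Finset.range (n + 1) ×ˢ Finset.range (n + 1) ×ˢ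
            Finset.range (n + 1) ×ˢ Finset.range (n + 1)).filter
          (fun q => q.1 + q.2.1 + q.2.2.1 + 2 * q.2.2.2 = n ∧
            1 ≤ q.2.2.1 + q.2.2.2),
        (-1 : ℂ) ^ q.2.2.2 * (n : ℂ) *
          (∏ k ∈ Finset.Icc 1 (q.2.2.1 + q.2.2.2 - 1),
            (((q.1 + k : ℕ) : ℂ) * ((q.2.1 + k : ℕ) : ℂ))) /
          ((q.2.2.1.factorial : ℂ) * (q.2.2.2.factorial : ℂ) *
            ((q.2.2.1 + q.2.2.2 - 1).factorial : ℂ)) *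
          (y ^ q.1 * yb ^ q.2.1 * (w + wb) ^ q.2.2.1 *
            (y * wb + yb * w + w * wb) ^ q.2.2.2))
      = ∑ q ∈ (dom n).filter (fun q => 1 ≤ q.2.2.1 + q.2.2.2), cx q * Mo y yb w wb q := by
    rw [dom, Finset.filter_filter]
    apply Finset.sum_congr
    · apply Finset.filter_congr
      intro q hq
      simp only [wt]
    · rintro ⟨a, b, c, d⟩ hq
      rw [Finset.mem_filter] at hq
      obtain ⟨-, hwt, hm⟩ := hq
      rw [cx_pos _ _ _ _ hm]
      rw [Mo]
      rw [show a + b + c + 2*d = n from hwt]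
      push_cast [p1, ← Finset.prod_mul_distrib]
      ring
  rw [hRHS]
  -- split S0
  have hsplit := Finset.sum_filter_add_sum_filter_not (dom n)
    (fun q => 1 ≤ q.2.2.1 + q.2.2.2) (fun q => cx q * Mo y yb w wb q)
  have htail := tail_eval y yb w wb n hn
  have hS0 : S0 y yb w wb n = (y + w)^n + (yb + wb)^n := S0_closed y yb w wb n hn
  rw [S0] at hS0
  -- LHS
  have hyw : (y + w)^n = (∑ k ∈ Finset.range n, y ^ k * w ^ (n-k) * (n.choose k : ℂ)) + y^n := by
    rw [add_pow, Finset.sum_range_succ]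
    simp
  have hybwb : (yb + wb)^n
      = (∑ k ∈ Finset.range n, yb ^ k * wb ^ (n-k) * (n.choose k : ℂ)) + yb^n := by
    rw [add_pow, Finset.sum_range_succ]
    simp
  have hL : ∑ k ∈ Finset.range n, (n.choose k : ℂ) *
        (y ^ k * w ^ (n - k) + yb ^ k * wb ^ (n - k))
      = (∑ k ∈ Finset.range n, y ^ k * w ^ (n-k) * (n.choose k : ℂ))
        + (∑ k ∈ Finset.range n, yb ^ k * wb ^ (n-k) * (n.choose k : ℂ)) := by
    rw [← Finset.sum_add_distrib]
    apply Finset.sum_congr rfl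
    intro k hk
    ring
  rw [hL]
  have h1 : (∑ q ∈ (dom n).filter (fun q => 1 ≤ q.2.2.1 + q.2.2.2), cx q * Mo y yb w wb q)
      = (y + w)^n + (yb + wb)^n - (y^n + yb^n) := by
    linear_combination hsplit + hS0 - htail
  rw [h1, hyw, hybwb]
  ring
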